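/- (Trichotomy) Let T be quasi nonexpansive and fixed-point closed, x₀ ∈ X, C₀ = X, C_{n+1} = Cₙ ∩ H(xₙ, Txₙ), x_{n+1} = P_{C_{n+1}} x₀ when C_{n+1} ≠ ∅. Then exactly one of the following holds: (i) Fix T ≠ ∅ and xₙ → P_{Fix T} x₀; (ii) Fix T = ∅ and the sequence is well defined with ‖xₙ‖ → +∞; (iii) Fix T = ∅ and C_{n+1} = ∅ for some n. -/

import Mathlib

open Filter Topology

section aux
variable {X : Type*} [NormedAddCommGroup X] [InnerProductSpace ℝ X]

lemma sq_norm_le_iff (a b : X) : ‖a‖ ≤ ‖b‖ ↔ ‖a‖^2 ≤ ‖b‖^2 := by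
  constructor
  · intro h; exact pow_le_pow_left₀ (norm_nonneg _) h 2
  · intro h
    have := Real.sqrt_le_sqrt h
    rwa [Real.sqrt_sq (norm_nonneg _), Real.sqrt_sq (norm_nonneg _)] at this

lemma halfspace_convex (x y : X) : Convex ℝ {z : X | ‖y - z‖ ≤ ‖x - z‖} := by
  have h : {z : X | ‖y - z‖ ≤ ‖x - z‖}
      = {w : X | ‖y‖^2 - ‖x‖^2 ≤ (fun z => (2:ℝ) * (inner ℝ (y - x) z : ℝ)) w} := by
    ext z
    simp only [Set.mem_setOf_eq]
    rw [sq_norm_le_iff, norm_sub_sq_real, norm_sub_sq_real, inner_sub_left]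
    constructor <;> intro h <;> linarith
  rw [h]
  refine convex_halfSpace_ge ?_ _
  exact ⟨fun a b => by rw [inner_add_right]; ring,
         fun c a => by rw [real_inner_smul_right]; simp [smul_eq_mul]; ring⟩

lemma var_ineq {K : Set X} (hK : Convex ℝ K) {u v : X} (hu : u ∈ K)
    (hmin : ∀ c ∈ K, ‖v - u‖ ≤ ‖v - c‖) :
    ∀ c ∈ K, (inner ℝ (v - u) (c - u) : ℝ) ≤ 0 := by
  refine (norm_eq_iInf_iff_real_inner_le_zero hK hu).mp ?_
  haveI : Nonempty K := ⟨⟨u, hu⟩⟩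
  refine le_antisymm (le_ciInf fun w => hmin w w.2) ?_
  exact ciInf_le ⟨0, fun r ⟨w, hw⟩ => hw ▸ norm_nonneg _⟩ (⟨u, hu⟩ : K)

end aux

section main
variable {X : Type*} [NormedAddCommGroup X] [InnerProductSpace ℝ X] [CompleteSpace X]

lemma main_conv
    (T : X → X)
    (hfpc : ∀ (u : ℕ → X) (xbar : X), Tendsto u atTop (𝓝 xbar) →
      Tendsto (fun n => u n - T (u n)) atTop (𝓝 0) → T xbar = xbar)
    (x₀ : X) (C : ℕ → Set X) (x : ℕ → X)
    (hC0 : C 0 = Set.univ)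
    (hCrec : ∀ n, C (n + 1) = C n ∩ {z : X | ‖T (x n) - z‖ ≤ ‖x n - z‖})
    (hx0 : x 0 = x₀)
    (hproj : ∀ n, (C (n + 1)).Nonempty →
      x (n + 1) ∈ C (n + 1) ∧ ∀ c ∈ C (n + 1), ‖x₀ - x (n + 1)‖ ≤ ‖x₀ - c‖)
    (hne : ∀ n, (C n).Nonempty)
    (hbdd : ∃ M, ∀ n, ‖x₀ - x (n + 1)‖ ≤ M) :
    ∃ xbar, T xbar = xbar ∧ Tendsto x atTop (𝓝 xbar) ∧
      ∀ c, (∀ n, c ∈ C n) → ‖x₀ - xbar‖ ≤ ‖x₀ - c‖ := by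
  obtain ⟨M, hM⟩ := hbdd
  have hmem : ∀ n, x (n + 1) ∈ C (n + 1) := fun n => (hproj n (hne _)).1
  have hA : Antitone C := antitone_nat_of_succ_le fun n => by
    rw [hCrec]; exact Set.inter_subset_left
  have hconv : ∀ n, Convex ℝ (C n) := by
    intro n; induction n with
    | zero => rw [hC0]; exact convex_univ
    | succ k ih => rw [hCrec]; exact ih.inter (halfspace_convex _ _)
  have hvar : ∀ n, ∀ c ∈ C (n + 1), (inner ℝ (x₀ - x (n + 1)) (c - x (n + 1)) : ℝ) ≤ 0 :=
    fun n => var_ineq (hconv (n + 1)) (hmem n) (hproj n (hne _)).2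
  -- e n = squared distance
  set e : ℕ → ℝ := fun n => ‖x₀ - x (n + 1)‖ ^ 2 with he
  have key : ∀ n m, n ≤ m → ‖x (m + 1) - x (n + 1)‖ ^ 2 ≤ e m - e n := by
    intro n m hnm
    have h0 := hvar n (x (m + 1)) (hA (by omega) (hmem m))
    have h1 : x₀ - x (m + 1) = (x₀ - x (n + 1)) - (x (m + 1) - x (n + 1)) := by abel
    have h2 : ‖x₀ - x (m + 1)‖ ^ 2 = ‖x₀ - x (n + 1)‖ ^ 2
        - 2 * (inner ℝ (x₀ - x (n + 1)) (x (m + 1) - x (n + 1)) : ℝ)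
        + ‖x (m + 1) - x (n + 1)‖ ^ 2 := by rw [h1, norm_sub_sq_real]
    have h3 : e m = ‖x₀ - x (m + 1)‖ ^ 2 := rfl
    have h4 : e n = ‖x₀ - x (n + 1)‖ ^ 2 := rfl
    rw [h3, h4]
    nlinarith
  have emono : Monotone e := monotone_nat_of_le_succ fun n => by
    have := key n (n + 1) (by omega)
    nlinarith [sq_nonneg ‖x (n + 1 + 1) - x (n + 1)‖]
  have ebdd : BddAbove (Set.range e) := by
    refine ⟨M ^ 2, ?_⟩
    rintro r ⟨n, rfl⟩
    exact pow_le_pow_left₀ (norm_nonneg _) (hM n) 2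
  have eS : Tendsto e atTop (𝓝 (⨆ i, e i)) := tendsto_atTop_ciSup emono ebdd
  set S := ⨆ i, e i with hS
  have eleS : ∀ n, e n ≤ S := fun n => le_ciSup ebdd n
  -- Cauchy
  have hdistkey : ∀ n m N : ℕ, N ≤ n → N ≤ m →
      dist (x (n + 1)) (x (m + 1)) ≤ Real.sqrt (S - e N) := by
    have base : ∀ n m N : ℕ, N ≤ n → n ≤ m →
        dist (x (n + 1)) (x (m + 1)) ≤ Real.sqrt (S - e N) := by
      intro n m N hNn hnm
      rw [dist_eq_norm, ← Real.sqrt_sq (norm_nonneg (x (n+1) - x (m+1)))]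
      apply Real.sqrt_le_sqrt
      have := key n m hnm
      have h2 := eleS m
      have h3 := emono hNn
      rw [norm_sub_rev]
      nlinarith
    intro n m N hNn hNm
    rcases le_total n m with h | h
    · exact base n m N hNn h
    · rw [dist_comm]; exact base m n N hNm h
  have hb0 : Tendsto (fun N => Real.sqrt (S - e N)) atTop (𝓝 0) := by
    have : Tendsto (fun N => S - e N) atTop (𝓝 (S - S)) :=
      tendsto_const_nhds.sub eS
    rw [sub_self] at this
    have := (Real.continuous_sqrt.tendsto 0).comp this
    simpa [Real.sqrt_zero, Function.comp_def] using this
  have hcauchy : CauchySeq (fun n => x (n + 1)) :=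
    cauchySeq_of_le_tendsto_0 _ hdistkey hb0
  obtain ⟨xbar, hxbar⟩ := cauchySeq_tendsto_of_complete hcauchy
  have hxlim : Tendsto x atTop (𝓝 xbar) := (tendsto_add_atTop_iff_nat 1).mp hxbar
  -- asymptotic regularity
  have hH : ∀ n, ‖T (x n) - x (n + 1)‖ ≤ ‖x n - x (n + 1)‖ := by
    intro n
    have := hmem n
    rw [hCrec] at this
    exact this.2
  have hreg : Tendsto (fun n => x n - T (x n)) atTop (𝓝 0) := by
    rw [tendsto_zero_iff_norm_tendsto_zero]
    have hd : Tendsto (fun n => 2 * dist (x n) (x (n + 1))) atTop (𝓝 0) := by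
      have : Tendsto (fun n => dist (x n) (x (n + 1))) atTop (𝓝 (dist xbar xbar)) :=
        hxlim.dist ((tendsto_add_atTop_iff_nat 1).mpr hxlim)
      rw [dist_self] at this
      simpa using this.const_mul 2
    refine squeeze_zero (fun n => norm_nonneg _) (fun n => ?_) hd
    have h1 : ‖x n - T (x n)‖ ≤ ‖x n - x (n + 1)‖ + ‖T (x n) - x (n + 1)‖ := by
      have : x n - T (x n) = (x n - x (n + 1)) - (T (x n) - x (n + 1)) := by abel
      rw [this]; exact norm_sub_le _ _
    have h2 := hH n
    rw [dist_eq_norm]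
    linarith
  refine ⟨xbar, hfpc x xbar hxlim hreg, hxlim, ?_⟩
  intro c hc
  have hlim : Tendsto (fun n => ‖x₀ - x (n + 1)‖) atTop (𝓝 ‖x₀ - xbar‖) :=
    (tendsto_const_nhds.sub hxbar).norm
  exact le_of_tendsto hlim (Eventually.of_forall fun n =>
    (hproj n (hne _)).2 c (hc (n + 1)))

end main


theorem stmt_10 {X : Type*} [NormedAddCommGroup X] [InnerProductSpace ℝ X]
    [CompleteSpace X]
    (T : X → X)
    (hqne : ∀ x : X, ∀ y ∈ {z : X | T z = z}, ‖T x - y‖ ≤ ‖x - y‖)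
    (hfpc : ∀ (u : ℕ → X) (xbar : X), Tendsto u atTop (𝓝 xbar) →
      Tendsto (fun n => u n - T (u n)) atTop (𝓝 0) → T xbar = xbar)
    (x₀ : X) (C : ℕ → Set X) (x : ℕ → X)
    (hC0 : C 0 = Set.univ)
    (hCrec : ∀ n, C (n + 1) = C n ∩ {z : X | ‖T (x n) - z‖ ≤ ‖x n - z‖})
    (hx0 : x 0 = x₀)
    (hproj : ∀ n, (C (n + 1)).Nonempty →
      x (n + 1) ∈ C (n + 1) ∧ ∀ c ∈ C (n + 1), ‖x₀ - x (n + 1)‖ ≤ ‖x₀ - c‖) :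
    ({z : X | T z = z}.Nonempty ∧ ∃ p ∈ {z : X | T z = z},
        (∀ c ∈ {z : X | T z = z}, ‖x₀ - p‖ ≤ ‖x₀ - c‖) ∧
        Tendsto x atTop (𝓝 p)) ∨
    ({z : X | T z = z} = ∅ ∧ (∀ n, (C n).Nonempty) ∧
        Tendsto (fun n => ‖x n‖) atTop atTop) ∨
    ({z : X | T z = z} = ∅ ∧ ∃ n, C (n + 1) = ∅) := by
  by_cases hfix : {z : X | T z = z}.Nonempty
  · -- case (i)
    obtain ⟨z₀, hz₀⟩ := hfix
    have hsub : ∀ n, ∀ z ∈ {z : X | T z = z}, z ∈ C n := by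
      intro n
      induction n with
      | zero => intro z _; rw [hC0]; trivial
      | succ k ih =>
        intro z hz
        rw [hCrec]
        exact ⟨ih z hz, hqne (x k) z hz⟩
    have hne : ∀ n, (C n).Nonempty := fun n => ⟨z₀, hsub n z₀ hz₀⟩
    have hbdd : ∃ M, ∀ n, ‖x₀ - x (n + 1)‖ ≤ M :=
      ⟨‖x₀ - z₀‖, fun n => (hproj n (hne _)).2 z₀ (hsub _ z₀ hz₀)⟩
    obtain ⟨xbar, hTfix, hlim, hmin⟩ :=
      main_conv T hfpc x₀ C x hC0 hCrec hx0 hproj hne hbdd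
    exact Or.inl ⟨⟨z₀, hz₀⟩, xbar, hTfix,
      fun c hc => hmin c (fun n => hsub n c hc), hlim⟩
  · have hfixe : {z : X | T z = z} = ∅ := Set.not_nonempty_iff_eq_empty.mp hfix
    by_cases hall : ∀ n, (C n).Nonempty
    · -- case (ii)
      refine Or.inr (Or.inl ⟨hfixe, hall, ?_⟩)
      have hbdd : ¬ ∃ M, ∀ n, ‖x₀ - x (n + 1)‖ ≤ M := by
        intro hbdd
        obtain ⟨xbar, hTfix, _, _⟩ :=
          main_conv T hfpc x₀ C x hC0 hCrec hx0 hproj hall hbdd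
        exact absurd hfixe (by
          intro h
          have : xbar ∈ {z : X | T z = z} := hTfix
          rw [h] at this
          exact this)
      have hA : Antitone C := antitone_nat_of_succ_le fun n => by
        rw [hCrec]; exact Set.inter_subset_left
      set d : ℕ → ℝ := fun n => ‖x₀ - x (n + 1)‖ with hd
      have dmono : Monotone d := monotone_nat_of_le_succ fun n =>
        (hproj n (hall _)).2 (x (n + 2))
          (hA (by omega : n + 1 ≤ n + 2) (hproj (n + 1) (hall _)).1)
      have dtop : Tendsto d atTop atTop := by
        refine tendsto_atTop_atTop_of_monotone' dmono ?_
        rintro ⟨M, hM⟩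
        exact hbdd ⟨M, fun n => hM ⟨n, rfl⟩⟩
      have h1 : Tendsto (fun n => ‖x (n + 1)‖) atTop atTop := by
        refine tendsto_atTop_mono (fun n => ?_)
          (tendsto_atTop_add_const_right _ (-‖x₀‖) dtop)
        have := norm_sub_le x₀ (x (n + 1))
        simp only [hd]
        linarith
      exact (tendsto_add_atTop_iff_nat 1).mp h1
    · -- case (iii)
      push_neg at hall
      obtain ⟨n, hn⟩ := hall
      match n, hn with
      | 0, hn => 
        rw [hC0] at hn
        haveI : Nonempty X := ⟨0⟩
        exact absurd hn Set.univ_nonempty.ne_empty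
      | (m + 1), hn => exact Or.inr (Or.inr ⟨hfixe, m, hn⟩)
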